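/- Let M = ℤ_d^{2n} with basis (z₁,…,z_n,x₁,…,x_n) and symplectic form φ given by φ(z_i,z_j) = φ(x_i,x_j) = 0 and φ(z_i,x_j) = δ_{ij} = −φ(x_j,z_i). Then: (i) there is a unique surjective group homomorphism τ : P_n → M with τ(Z_r) = z_r, τ(X_r) = x_r for all r and τ(ζ·id) = 0, and its kernel is the cyclic group generated by the scalar operator ζ·id, which has order d̄; (ii) for all x, y ∈ P_n one has x y = ξ^{φ(τ(x),τ(y))} y x; (iii) every element of M has a τ-preimage in P_n of the same order. (In the terminology of the paper: P_n is a Heisenberg extension of (ℤ_d^{2n}, φ).) -/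

import Mathlib

set_option linter.unusedSectionVars false
set_option maxHeartbeats 1000000


noncomputable section

namespace QuditPauli

/-- `d̄`: equals `d` if `d` is odd and `2d` if `d` is even. -/
def dbar (d : ℕ) : ℕ := if d % 2 = 1 then d else 2 * d

/-- The Hilbert space of `n` qudits of dimension `d`, modelled as the space of
complex functions on `(ℤ_d)^n`; the standard basis vectors `δ_w` realize the basis
`v_{i₁} ⊗ … ⊗ v_{i_n}` of `(ℂ^d)^{⊗n}`. -/
abbrev QV (d n : ℕ) : Type := (Fin n → ZMod d) → ℂ

variable {d n : ℕ}

/-- The invertible diagonal operator multiplying the `w`-th coordinate by `c w`. -/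
def diagOp (c : (Fin n → ZMod d) → ℂ) (hc : ∀ w, c w ≠ 0) : QV d n ≃ₗ[ℂ] QV d n where
  toFun f := fun w => c w * f w
  invFun f := fun w => (c w)⁻¹ * f w
  map_add' f g := by funext w; simp [mul_add]
  map_smul' a f := by funext w; simp only [Pi.smul_apply, smul_eq_mul, RingHom.id_apply]; ring
  left_inv f := by
    funext w
    field_simp
    rw [mul_comm, mul_div_assoc, div_self (hc w), mul_one]
  right_inv f := by
    funext w
    field_simp
    rw [mul_comm, mul_div_assoc, div_self (hc w), mul_one]

/-- The permutation of `(ℤ_d)^n` subtracting `1` from the `r`-th coordinate. -/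
def shiftEquiv (d n : ℕ) (r : Fin n) : (Fin n → ZMod d) ≃ (Fin n → ZMod d) where
  toFun w := Function.update w r (w r - 1)
  invFun w := Function.update w r (w r + 1)
  left_inv w := by
    funext i
    rcases eq_or_ne i r with rfl | h
    · simp
    · simp [Function.update_of_ne h]
  right_inv w := by
    funext i
    rcases eq_or_ne i r with rfl | h
    · simp
    · simp [Function.update_of_ne h]

/-- The qudit Pauli operator `X` on the `r`-th factor: on basis vectors,
`X_r (v_{i₁} ⊗ … ⊗ v_{i_r} ⊗ … ) = v_{i₁} ⊗ … ⊗ v_{i_r + 1} ⊗ …`. -/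
def Xop (d n : ℕ) (r : Fin n) : QV d n ≃ₗ[ℂ] QV d n :=
  LinearEquiv.funCongrLeft ℂ ℂ (shiftEquiv d n r)

/-- The qudit Pauli operator `Z` (with parameter `ξ`) on the `r`-th factor: on basis
vectors, `Z_r (v_{i₁} ⊗ … ⊗ v_{i_r} ⊗ …) = ξ^{i_r} · (v_{i₁} ⊗ … ⊗ v_{i_r} ⊗ …)`. -/
def Zop (d n : ℕ) (r : Fin n) (ξ : ℂ) (hξ : ξ ≠ 0) : QV d n ≃ₗ[ℂ] QV d n :=
  diagOp (fun w => ξ ^ (w r).val) (fun _ => pow_ne_zero _ hξ)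

/-- The scalar operator `c · id`. -/
def scalarOp (d n : ℕ) (c : ℂ) (hc : c ≠ 0) : QV d n ≃ₗ[ℂ] QV d n :=
  diagOp (fun _ => c) (fun _ => hc)

/-- The `n`-qudit Pauli group `P_n = P_n^{(d)}`: the subgroup of `GL((ℂ^d)^{⊗n})`
generated by `X₁,…,X_n`, `Z₁,…,Z_n` (with `ξ = ζ²`) and the scalar operator `ζ·id`. -/
def pauliGroup (d n : ℕ) (ζ : ℂ) (hζ : ζ ≠ 0) : Subgroup (QV d n ≃ₗ[ℂ] QV d n) :=
  Subgroup.closure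
    ({scalarOp d n ζ hζ} ∪ Set.range (fun r => Xop d n r) ∪
      Set.range (fun r => Zop d n r (ζ ^ 2) (pow_ne_zero 2 hζ)))

lemma scalarOp_mem (d n : ℕ) (ζ : ℂ) (hζ : ζ ≠ 0) :
    scalarOp d n ζ hζ ∈ pauliGroup d n ζ hζ :=
  Subgroup.subset_closure (by simp)

lemma Xop_mem (d n : ℕ) (ζ : ℂ) (hζ : ζ ≠ 0) (r : Fin n) :
    Xop d n r ∈ pauliGroup d n ζ hζ :=
  Subgroup.subset_closure (by simp)

lemma Zop_mem (d n : ℕ) (ζ : ℂ) (hζ : ζ ≠ 0) (r : Fin n) :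
    Zop d n r (ζ ^ 2) (pow_ne_zero 2 hζ) ∈ pauliGroup d n ζ hζ :=
  Subgroup.subset_closure (by simp)

/-- The scalar operator `ζ·id` as an element of the Pauli group. -/
def sP (d n : ℕ) (ζ : ℂ) (hζ : ζ ≠ 0) : (pauliGroup d n ζ hζ) :=
  ⟨scalarOp d n ζ hζ, scalarOp_mem d n ζ hζ⟩

/-- `X_r` as an element of the Pauli group. -/
def xP (d n : ℕ) (ζ : ℂ) (hζ : ζ ≠ 0) (r : Fin n) : (pauliGroup d n ζ hζ) :=
  ⟨Xop d n r, Xop_mem d n ζ hζ r⟩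

/-- `Z_r` as an element of the Pauli group. -/
def zP (d n : ℕ) (ζ : ℂ) (hζ : ζ ≠ 0) (r : Fin n) : (pauliGroup d n ζ hζ) :=
  ⟨Zop d n r (ζ ^ 2) (pow_ne_zero 2 hζ), Zop_mem d n ζ hζ r⟩

/-- A linear automorphism of `(ℂ^d)^{⊗n}` is unitary if it preserves the standard
Hermitian inner product `⟪f, g⟫ = ∑_w conj (f w) * g w`. -/
def IsUnitaryOp (d n : ℕ) [NeZero d] (U : QV d n ≃ₗ[ℂ] QV d n) : Prop :=
  ∀ f g : QV d n,
    ∑ w : Fin n → ZMod d, (starRingEnd ℂ) (U f w) * (U g w)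
      = ∑ w : Fin n → ZMod d, (starRingEnd ℂ) (f w) * g w

/-- The protected space `V^H = {v ∈ V : h(v) = v for all h ∈ H}` of a subgroup `H` of
the Pauli group. -/
def fixedSpace {d n : ℕ} {ζ : ℂ} {hζ : ζ ≠ 0} (H : Subgroup (pauliGroup d n ζ hζ)) :
    Submodule ℂ (QV d n) where
  carrier := {v | ∀ g ∈ H, ((g : QV d n ≃ₗ[ℂ] QV d n) : QV d n ≃ₗ[ℂ] QV d n) v = v}
  add_mem' := by
    intro a b ha hb g hg
    rw [map_add, ha g hg, hb g hg]
  zero_mem' := by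
    intro g hg
    exact map_zero _
  smul_mem' := by
    intro c v hv g hg
    rw [map_smul, hv g hg]

end QuditPauli

namespace QuditPauli

/-- The phase-space `ℤ_d`-module `M = ℤ_d^{2n}`: the first component records the
`z`-coordinates, the second the `x`-coordinates. -/
abbrev PhSp (d n : ℕ) : Type := (Fin n → ZMod d) × (Fin n → ZMod d)

/-- The basis vector `z_r` of the phase space. -/
def zvec (d n : ℕ) (r : Fin n) : PhSp d n := (Pi.single r 1, 0)

/-- The basis vector `x_r` of the phase space. -/
def xvec (d n : ℕ) (r : Fin n) : PhSp d n := (0, Pi.single r 1)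

/-- The standard symplectic form on the phase space: `φ(z_i, z_j) = φ(x_i, x_j) = 0`
and `φ(z_i, x_j) = δ_{ij} = −φ(x_j, z_i)`. -/
def phiForm (d n : ℕ) (a b : PhSp d n) : ZMod d :=
  ∑ i : Fin n, (a.1 i * b.2 i - b.1 i * a.2 i)

end QuditPauli

namespace QuditPauli

/-! ### Auxiliary machinery: Weyl normal form of Pauli operators -/

section Aux

variable {d n : ℕ}

/-- The dot product of two vectors in `(ℤ_d)^n`. -/
def dot (a w : Fin n → ZMod d) : ZMod d := ∑ i, a i * w i

lemma dot_zero_left (w : Fin n → ZMod d) : dot (0 : Fin n → ZMod d) w = 0 := by simp [dot]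

lemma dot_zero_right (a : Fin n → ZMod d) : dot a (0 : Fin n → ZMod d) = 0 := by simp [dot]

lemma dot_add_left (a a' w : Fin n → ZMod d) : dot (a + a') w = dot a w + dot a' w := by
  simp [dot, add_mul, Finset.sum_add_distrib]

lemma dot_add_right (a w w' : Fin n → ZMod d) : dot a (w + w') = dot a w + dot a w' := by
  simp [dot, mul_add, Finset.sum_add_distrib]

lemma dot_sub_right (a w u : Fin n → ZMod d) : dot a (w - u) = dot a w - dot a u := by
  simp [dot, mul_sub, Finset.sum_sub_distrib]

lemma dot_neg_left (a w : Fin n → ZMod d) : dot (-a) w = -(dot a w) := by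
  simp [dot, Finset.sum_neg_distrib]

lemma dot_single_left (r : Fin n) (k : ZMod d) (w : Fin n → ZMod d) :
    dot (Pi.single r k) w = k * w r := by
  classical
  simp [dot, Pi.single_apply, ite_mul]

lemma dot_single_right (a : Fin n → ZMod d) (r : Fin n) (k : ZMod d) :
    dot a (Pi.single r k) = a r * k := by
  classical
  simp [dot, Pi.single_apply, mul_ite]

lemma dot_nsmul_left (k : ℕ) (a w : Fin n → ZMod d) :
    dot (k • a) w = (k : ZMod d) * dot a w := by
  simp [dot, Finset.mul_sum, nsmul_eq_mul, mul_assoc]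

lemma dot_nsmul_right (k : ℕ) (a w : Fin n → ZMod d) :
    dot a (k • w) = (k : ZMod d) * dot a w := by
  simp [dot, Finset.mul_sum, nsmul_eq_mul]
  refine Finset.sum_congr rfl fun i _ => by ring

/-- The character `x ↦ ξ^x` of `ℤ_d`. -/
def chi (ξ : ℂ) (x : ZMod d) : ℂ := ξ ^ x.val

lemma pow_eq_pow_mod {ξ : ℂ} (hd : ξ ^ d = 1) {a b : ℕ} (h : a % d = b % d) :
    ξ ^ a = ξ ^ b := by
  have key : ∀ m : ℕ, ξ ^ m = ξ ^ (m % d) := by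
    intro m
    conv_lhs => rw [← Nat.div_add_mod m d]
    rw [pow_add, pow_mul, hd, one_pow, one_mul]
  rw [key a, key b, h]

variable [NeZero d]

lemma chi_zero (ξ : ℂ) : chi (d := d) ξ 0 = 1 := by simp [chi]

lemma chi_add {ξ : ℂ} (hd : ξ ^ d = 1) (x y : ZMod d) :
    chi ξ (x + y) = chi ξ x * chi ξ y := by
  unfold chi
  rw [← pow_add]
  refine pow_eq_pow_mod hd ?_
  rw [ZMod.val_add, Nat.mod_mod_of_dvd _ dvd_rfl]

lemma chi_natCast {ξ : ℂ} (hd : ξ ^ d = 1) (N : ℕ) :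
    chi ξ ((N : ZMod d)) = ξ ^ N := by
  unfold chi
  refine pow_eq_pow_mod hd ?_
  rw [ZMod.val_natCast, Nat.mod_mod_of_dvd _ dvd_rfl]

lemma chi_neg_mul {ξ : ℂ} (hd : ξ ^ d = 1) (x : ZMod d) :
    chi ξ (-x) * chi ξ x = 1 := by
  rw [← chi_add hd, neg_add_cancel, chi_zero]

lemma chi_ne_zero {ξ : ℂ} (hξ0 : ξ ≠ 0) (x : ZMod d) : chi ξ x ≠ 0 :=
  pow_ne_zero _ hξ0

/-- `g` is the Weyl operator with phase `c`, `Z`-part `a`, `X`-part `b`. -/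
def IsWeyl (ξ : ℂ) (g : QV d n ≃ₗ[ℂ] QV d n) (c : ℂ) (a b : Fin n → ZMod d) : Prop :=
  ∀ f w, g f w = c * chi ξ (dot a w) * f (w - b)

lemma IsWeyl.one (ξ : ℂ) : IsWeyl (d := d) (n := n) ξ 1 1 0 0 := by
  intro f w
  simp [dot_zero_left, chi_zero]

lemma IsWeyl.mul {ξ : ℂ} (hd : ξ ^ d = 1) {g h : QV d n ≃ₗ[ℂ] QV d n}
    {c c' : ℂ} {a b a' b' : Fin n → ZMod d}
    (hg : IsWeyl ξ g c a b) (hh : IsWeyl ξ h c' a' b') :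
    IsWeyl ξ (g * h) (c * c' * chi ξ (-(dot a' b))) (a + a') (b + b') := by
  intro f w
  have h0 : (g * h) f w = g (h f) w := rfl
  rw [h0, hg, hh, dot_add_left, chi_add hd, dot_sub_right, sub_eq_add_neg (dot a' w),
    chi_add hd, sub_sub]
  ring

lemma IsWeyl.inv {ξ : ℂ} (hd : ξ ^ d = 1) (hξ0 : ξ ≠ 0) {g : QV d n ≃ₗ[ℂ] QV d n}
    {c : ℂ} {a b : Fin n → ZMod d} (hc : c ≠ 0) (hg : IsWeyl ξ g c a b) :
    IsWeyl ξ g⁻¹ ((c * chi ξ (dot a b))⁻¹) (-a) (-b) := by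
  intro f w
  have key : g ((g⁻¹ : QV d n ≃ₗ[ℂ] QV d n) f) = f := g.apply_symm_apply f
  have h1 := hg ((g⁻¹ : QV d n ≃ₗ[ℂ] QV d n) f) (w + b)
  rw [key, add_sub_cancel_right] at h1
  rw [sub_neg_eq_add, dot_neg_left, h1, dot_add_right, chi_add hd]
  have h2 := chi_neg_mul hd (dot a w)
  calc (g⁻¹ : QV d n ≃ₗ[ℂ] QV d n) f w
      = (chi ξ (-(dot a w)) * chi ξ (dot a w)) * ((c⁻¹ * c) *
          ((chi ξ (dot a b))⁻¹ * chi ξ (dot a b))) * ((g⁻¹ : QV d n ≃ₗ[ℂ] QV d n) f w) := by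
        rw [h2, inv_mul_cancel₀ hc, inv_mul_cancel₀ (chi_ne_zero hξ0 (dot a b))]
        ring
    _ = (c * chi ξ (dot a b))⁻¹ * chi ξ (-(dot a w)) *
          (c * (chi ξ (dot a w) * chi ξ (dot a b)) * ((g⁻¹ : QV d n ≃ₗ[ℂ] QV d n) f w)) := by
        rw [mul_inv]
        ring

lemma IsWeyl.ext {ξ : ℂ} {g g' : QV d n ≃ₗ[ℂ] QV d n} {c : ℂ} {a b : Fin n → ZMod d}
    (hg : IsWeyl ξ g c a b) (hg' : IsWeyl ξ g' c a b) : g = g' := by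
  refine LinearEquiv.toLinearMap_injective (LinearMap.ext fun f => ?_)
  funext w
  rw [show (g.toLinearMap f) w = g f w from rfl, show (g'.toLinearMap f) w = g' f w from rfl,
    hg, hg']

/-- The delta function at `v`. -/
def delta (v : Fin n → ZMod d) : QV d n := fun w => if w = v then 1 else 0

lemma IsWeyl.unique {ξ : ℂ} (hprim : IsPrimitiveRoot ξ d) (hξ0 : ξ ≠ 0)
    {g : QV d n ≃ₗ[ℂ] QV d n} {c c' : ℂ} {a b a' b' : Fin n → ZMod d}
    (hc : c ≠ 0) (hg : IsWeyl ξ g c a b) (hg' : IsWeyl ξ g c' a' b') :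
    c' = c ∧ a' = a ∧ b' = b := by
  have hd : ξ ^ d = 1 := hprim.pow_eq_one
  have hb : b' = b := by
    by_contra hne
    have h1 := hg (delta b) (b + b)
    have h2 := hg' (delta b) (b + b)
    rw [h1] at h2
    have e1 : delta (d := d) (n := n) b (b + b - b) = 1 := by simp [delta]
    have e2 : delta (d := d) (n := n) b (b + b - b') = 0 := by
      simp only [delta, ite_eq_right_iff]
      intro hw
      exact absurd (by linear_combination (norm := abel) hw.symm : b' = b) hne
    rw [e1, e2, mul_zero] at h2
    exact (mul_ne_zero (mul_ne_zero hc (chi_ne_zero hξ0 _)) one_ne_zero) h2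
  have hb' : b = b' := hb.symm
  subst hb'
  have hcc : ∀ w, c * chi ξ (dot a w) = c' * chi ξ (dot a' w) := by
    intro w
    have h1 := hg (delta (w - b)) w
    have h2 := hg' (delta (w - b)) w
    rw [h1] at h2
    have e1 : delta (d := d) (n := n) (w - b) (w - b) = 1 := by simp [delta]
    rw [e1, mul_one, mul_one] at h2
    exact h2
  have hc0 : c = c' := by
    have := hcc 0
    rwa [dot_zero_right, dot_zero_right, chi_zero, mul_one, mul_one] at this
  have ha : a' = a := by
    funext r
    have h := hcc (Pi.single r 1)
    rw [dot_single_right, dot_single_right, mul_one, mul_one, ← hc0] at h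
    have h' : chi ξ (a r) = chi ξ (a' r) := mul_left_cancel₀ hc h
    have hval : (a r).val = (a' r).val :=
      hprim.pow_inj (ZMod.val_lt _) (ZMod.val_lt _) h'
    exact (ZMod.val_injective _ hval).symm
  exact ⟨hc0.symm, ha, rfl⟩

end Aux

section Gen

variable {d n : ℕ} [NeZero d]

lemma isWeyl_scalarOp (ξ : ℂ) (c : ℂ) (hc : c ≠ 0) :
    IsWeyl (d := d) (n := n) ξ (scalarOp d n c hc) c 0 0 := by
  intro f w
  simp [scalarOp, diagOp, dot_zero_left, chi_zero]

lemma isWeyl_Xop (ξ : ℂ) (r : Fin n) :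
    IsWeyl (d := d) ξ (Xop d n r) 1 0 (Pi.single r 1) := by
  intro f w
  have harg : shiftEquiv d n r w = w - Pi.single r 1 := by
    funext i
    rcases eq_or_ne i r with rfl | h
    · simp [shiftEquiv, sub_eq_add_neg]
    · simp [shiftEquiv, Function.update_of_ne h, Pi.single_apply, h]
  have h0 : Xop d n r f w = f (shiftEquiv d n r w) := rfl
  rw [h0, harg, dot_zero_left, chi_zero, one_mul, one_mul]

lemma isWeyl_Zop (ξ : ℂ) (hξ : ξ ≠ 0) (r : Fin n) :
    IsWeyl (d := d) ξ (Zop d n r ξ hξ) 1 (Pi.single r 1) 0 := by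
  intro f w
  have h0 : Zop d n r ξ hξ f w = ξ ^ (w r).val * f w := rfl
  rw [h0, dot_single_left, one_mul, sub_zero, one_mul]
  rfl

lemma isWeyl_scalarOp_pow (ξ : ℂ) (hd : ξ ^ d = 1) (c : ℂ) (hc : c ≠ 0) (k : ℕ) :
    IsWeyl (d := d) (n := n) ξ ((scalarOp d n c hc) ^ k) (c ^ k) 0 0 := by
  induction k with
  | zero => simpa using IsWeyl.one ξ
  | succ m ih =>
      have := ih.mul hd (isWeyl_scalarOp ξ c hc)
      rw [← pow_succ c m] at this
      simpa [dot_zero_left, chi_zero, pow_succ] using this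

lemma isWeyl_scalarOp_zpow (ξ : ℂ) (hd : ξ ^ d = 1) (hξ0 : ξ ≠ 0) (c : ℂ) (hc : c ≠ 0) (k : ℤ) :
    IsWeyl (d := d) (n := n) ξ ((scalarOp d n c hc) ^ k) (c ^ k) 0 0 := by
  cases k with
  | ofNat m => simpa using isWeyl_scalarOp_pow ξ hd c hc m
  | negSucc m =>
      have h1 := (isWeyl_scalarOp_pow (d := d) (n := n) ξ hd c hc (m + 1)).inv hd hξ0
        (pow_ne_zero _ hc)
      rw [dot_zero_right, chi_zero, mul_one, neg_zero] at h1
      rw [zpow_negSucc]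
      simpa using h1

lemma isWeyl_Zop_pow (ξ : ℂ) (hd : ξ ^ d = 1) (hξ : ξ ≠ 0) (r : Fin n) (k : ℕ) :
    IsWeyl (d := d) ξ ((Zop d n r ξ hξ) ^ k) 1 (Pi.single r (k : ZMod d)) 0 := by
  induction k with
  | zero => simpa using IsWeyl.one ξ
  | succ m ih =>
      have := ih.mul hd (isWeyl_Zop ξ hξ r)
      rw [← Pi.single_add] at this
      have hcast : ((m : ZMod d) + 1) = ((m + 1 : ℕ) : ZMod d) := by push_cast; ring
      rw [hcast] at this
      simpa [dot_zero_right, chi_zero, pow_succ] using this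

lemma isWeyl_Xop_pow (ξ : ℂ) (hd : ξ ^ d = 1) (r : Fin n) (k : ℕ) :
    IsWeyl (d := d) ξ ((Xop d n r) ^ k) 1 0 (Pi.single r (k : ZMod d)) := by
  induction k with
  | zero => simpa using IsWeyl.one ξ
  | succ m ih =>
      have := ih.mul hd (isWeyl_Xop ξ r)
      rw [← Pi.single_add] at this
      have hcast : ((m : ZMod d) + 1) = ((m + 1 : ℕ) : ZMod d) := by push_cast; ring
      rw [hcast] at this
      simpa [dot_zero_left, chi_zero, pow_succ] using this

lemma isWeyl_Z_list (ξ : ℂ) (hd : ξ ^ d = 1) (hξ : ξ ≠ 0) (a : Fin n → ZMod d) :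
    ∀ l : List (Fin n),
      IsWeyl (d := d) ξ ((l.map (fun r => (Zop d n r ξ hξ) ^ ((a r).val))).prod) 1
        ((l.map (fun r => Pi.single r (a r))).sum) 0 := by
  intro l
  induction l with
  | nil => simpa using IsWeyl.one ξ
  | cons r l ih =>
      have hz : IsWeyl (d := d) ξ ((Zop d n r ξ hξ) ^ ((a r).val)) 1 (Pi.single r (a r)) 0 := by
        have := isWeyl_Zop_pow ξ hd hξ r ((a r).val)
        rwa [show (((a r).val : ℕ) : ZMod d) = a r by simp [ZMod.natCast_val, ZMod.cast_id]]
          at this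
      have := hz.mul hd ih
      simpa [dot_zero_right, chi_zero] using this

lemma isWeyl_X_list (ξ : ℂ) (hd : ξ ^ d = 1) (b : Fin n → ZMod d) :
    ∀ l : List (Fin n),
      IsWeyl (d := d) ξ ((l.map (fun r => (Xop d n r) ^ ((b r).val))).prod) 1 0
        ((l.map (fun r => Pi.single r (b r))).sum) := by
  intro l
  induction l with
  | nil => simpa using IsWeyl.one ξ
  | cons r l ih =>
      have hx : IsWeyl (d := d) ξ ((Xop d n r) ^ ((b r).val)) 1 0 (Pi.single r (b r)) := by
        have := isWeyl_Xop_pow (d := d) (n := n) ξ hd r ((b r).val)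
        rwa [show (((b r).val : ℕ) : ZMod d) = b r by simp [ZMod.natCast_val, ZMod.cast_id]]
          at this
      have := hx.mul hd ih
      simpa [dot_zero_left, chi_zero] using this

lemma isWeyl_pow (ξ : ℂ) (hd : ξ ^ d = 1) {g : QV d n ≃ₗ[ℂ] QV d n}
    {a b : Fin n → ZMod d} (hg : IsWeyl ξ g 1 a b) (k : ℕ) :
    IsWeyl ξ (g ^ k)
      (chi ξ (-(((∑ j ∈ Finset.range k, j : ℕ) : ZMod d) * dot a b))) (k • a) (k • b) := by
  induction k with
  | zero => simpa [chi_zero] using IsWeyl.one ξ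
  | succ m ih =>
      have h1 := ih.mul hd hg
      rw [pow_succ g m] at *
      have harg : dot a (m • b) = (m : ZMod d) * dot a b := dot_nsmul_right m a b
      have hphase :
          chi ξ (-(((∑ j ∈ Finset.range m, j : ℕ) : ZMod d) * dot a b)) * 1 *
              chi ξ (-(dot a (m • b)))
            = chi ξ (-(((∑ j ∈ Finset.range (m + 1), j : ℕ) : ZMod d) * dot a b)) := by
        rw [mul_one, harg, ← chi_add hd]
        congr 1
        rw [Finset.sum_range_succ]
        push_cast
        ring
      rw [hphase] at h1
      have hsa : m • a + a = (m + 1) • a := by rw [succ_nsmul]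
      have hsb : m • b + b = (m + 1) • b := by rw [succ_nsmul]
      rwa [hsa, hsb] at h1

end Gen

/-! ### The phase-space data of elements of the Pauli group -/

section Tau

variable {d n : ℕ} [NeZero d] {ζ : ℂ}

lemma dbar_dvd_two_mul (d : ℕ) : dbar d ∣ 2 * d := by
  unfold dbar
  split
  · exact dvd_mul_left d 2
  · exact dvd_rfl

lemma xi_pow_d (hζ : IsPrimitiveRoot ζ (dbar d)) : (ζ ^ 2) ^ d = 1 := by
  rw [← pow_mul]
  exact (hζ.pow_eq_one_iff_dvd (2 * d)).mpr (dbar_dvd_two_mul d)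

lemma xi_prim (hζ : IsPrimitiveRoot ζ (dbar d)) : IsPrimitiveRoot (ζ ^ 2) d := by
  rcases Nat.even_or_odd d with he | ho
  · have hd2 : dbar d = 2 * d := by
      unfold dbar
      rw [if_neg]
      rw [Nat.even_iff] at he
      omega
    rw [hd2] at hζ
    exact hζ.pow (by have := NeZero.pos d; omega) rfl
  · have hd2 : dbar d = d := by
      unfold dbar
      rw [if_pos (Nat.odd_iff.mp ho)]
    rw [hd2] at hζ
    refine hζ.pow_of_coprime 2 ?_
    refine (Nat.Prime.coprime_iff_not_dvd Nat.prime_two).mpr ?_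
    rw [Nat.two_dvd_ne_zero]
    exact Nat.odd_iff.mp ho

lemma mem_weyl (hζ0 : ζ ≠ 0) (hζ : IsPrimitiveRoot ζ (dbar d))
    (g : pauliGroup d n ζ hζ0) :
    ∃ (c : ℂ) (a b : Fin n → ZMod d), (∃ k : ℤ, c = ζ ^ k) ∧
      IsWeyl (ζ ^ 2) (g : QV d n ≃ₗ[ℂ] QV d n) c a b := by
  have hd : (ζ ^ 2) ^ d = 1 := xi_pow_d hζ
  have hξ0 : (ζ ^ 2) ≠ 0 := pow_ne_zero 2 hζ0
  obtain ⟨g, hg⟩ := g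
  refine Subgroup.closure_induction ?_ ?_ ?_ ?_ hg
  · intro x hx
    simp only [Set.union_assoc, Set.mem_union, Set.mem_singleton_iff, Set.mem_range] at hx
    rcases hx with rfl | ⟨r, rfl⟩ | ⟨r, rfl⟩
    · exact ⟨ζ, 0, 0, ⟨1, (zpow_one ζ).symm⟩, isWeyl_scalarOp _ ζ hζ0⟩
    · exact ⟨1, 0, Pi.single r 1, ⟨0, (zpow_zero ζ).symm⟩, isWeyl_Xop _ r⟩
    · exact ⟨1, Pi.single r 1, 0, ⟨0, (zpow_zero ζ).symm⟩,
        isWeyl_Zop (d := d) (n := n) _ (pow_ne_zero 2 hζ0) r⟩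
  · exact ⟨1, 0, 0, ⟨0, (zpow_zero ζ).symm⟩, IsWeyl.one _⟩
  · rintro x y _ _ ⟨c, a, b, ⟨k, rfl⟩, hx⟩ ⟨c', a', b', ⟨k', rfl⟩, hy⟩
    refine ⟨ζ ^ k * ζ ^ k' * chi (ζ ^ 2) (-(dot a' b)), a + a', b + b',
      ⟨k + k' + 2 * ((-(dot a' b)).val : ℤ), ?_⟩, hx.mul hd hy⟩
    rw [zpow_add₀ hζ0, zpow_add₀ hζ0]
    congr 1
    show chi (ζ ^ 2) (-(dot a' b)) = ζ ^ (2 * ((-(dot a' b)).val : ℤ))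
    rw [show (2 * ((-(dot a' b)).val : ℤ)) = ((2 * (-(dot a' b)).val : ℕ) : ℤ) by push_cast; ring,
      zpow_natCast, chi, pow_mul]
  · rintro x _ ⟨c, a, b, ⟨k, rfl⟩, hx⟩
    refine ⟨(ζ ^ k * chi (ζ ^ 2) (dot a b))⁻¹, -a, -b,
      ⟨-(k + 2 * ((dot a b).val : ℤ)), ?_⟩, hx.inv hd hξ0 (zpow_ne_zero k hζ0)⟩
    rw [zpow_neg, zpow_add₀ hζ0]
    congr 2
    show chi (ζ ^ 2) (dot a b) = ζ ^ (2 * ((dot a b).val : ℤ))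
    rw [show (2 * ((dot a b).val : ℤ)) = ((2 * (dot a b).val : ℕ) : ℤ) by push_cast; ring,
      zpow_natCast, chi, pow_mul]

variable (hζ0 : ζ ≠ 0) (hζ : IsPrimitiveRoot ζ (dbar d))

/-- The phase of an element of the Pauli group. -/
noncomputable def wC (g : pauliGroup d n ζ hζ0) : ℂ := (mem_weyl hζ0 hζ g).choose

/-- The `Z`-part of an element of the Pauli group. -/
noncomputable def wa (g : pauliGroup d n ζ hζ0) : Fin n → ZMod d :=
  (mem_weyl hζ0 hζ g).choose_spec.choose

/-- The `X`-part of an element of the Pauli group. -/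
noncomputable def wb (g : pauliGroup d n ζ hζ0) : Fin n → ZMod d :=
  (mem_weyl hζ0 hζ g).choose_spec.choose_spec.choose

lemma w_spec (g : pauliGroup d n ζ hζ0) :
    (∃ k : ℤ, wC hζ0 hζ g = ζ ^ k) ∧
      IsWeyl (ζ ^ 2) (g : QV d n ≃ₗ[ℂ] QV d n) (wC hζ0 hζ g) (wa hζ0 hζ g) (wb hζ0 hζ g) :=
  (mem_weyl hζ0 hζ g).choose_spec.choose_spec.choose_spec

lemma wC_ne_zero (g : pauliGroup d n ζ hζ0) : wC hζ0 hζ g ≠ 0 := by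
  obtain ⟨k, hk⟩ := (w_spec hζ0 hζ g).1
  rw [hk]
  exact zpow_ne_zero k hζ0

lemma w_eq (g : pauliGroup d n ζ hζ0) {c : ℂ} {a b : Fin n → ZMod d} (hc : c ≠ 0)
    (h : IsWeyl (ζ ^ 2) (g : QV d n ≃ₗ[ℂ] QV d n) c a b) :
    wC hζ0 hζ g = c ∧ wa hζ0 hζ g = a ∧ wb hζ0 hζ g = b :=
  IsWeyl.unique (xi_prim hζ) (pow_ne_zero 2 hζ0) hc h (w_spec hζ0 hζ g).2

/-- The symplectic labelling homomorphism `τ`. -/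
noncomputable def tmap : pauliGroup d n ζ hζ0 →* Multiplicative (PhSp d n) where
  toFun g := Multiplicative.ofAdd (wa hζ0 hζ g, wb hζ0 hζ g)
  map_one' := by
    have h1 : IsWeyl (ζ ^ 2) ((1 : pauliGroup d n ζ hζ0) : QV d n ≃ₗ[ℂ] QV d n) 1 0 0 :=
      IsWeyl.one _
    obtain ⟨_, ha, hb⟩ := w_eq hζ0 hζ 1 one_ne_zero h1
    show Multiplicative.ofAdd (wa hζ0 hζ 1, wb hζ0 hζ 1) = 1
    rw [ha, hb]
    rfl
  map_mul' g h := by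
    have hg := (w_spec hζ0 hζ g).2
    have hh := (w_spec hζ0 hζ h).2
    have hm : IsWeyl (ζ ^ 2) ((g * h : pauliGroup d n ζ hζ0) : QV d n ≃ₗ[ℂ] QV d n)
        (wC hζ0 hζ g * wC hζ0 hζ h * chi (ζ ^ 2) (-(dot (wa hζ0 hζ h) (wb hζ0 hζ g))))
        (wa hζ0 hζ g + wa hζ0 hζ h) (wb hζ0 hζ g + wb hζ0 hζ h) :=
      hg.mul (xi_pow_d hζ) hh
    have hcne : wC hζ0 hζ g * wC hζ0 hζ h *
        chi (ζ ^ 2) (-(dot (wa hζ0 hζ h) (wb hζ0 hζ g))) ≠ 0 :=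
      mul_ne_zero (mul_ne_zero (wC_ne_zero hζ0 hζ g) (wC_ne_zero hζ0 hζ h))
        (chi_ne_zero (pow_ne_zero 2 hζ0) _)
    obtain ⟨_, ha, hb⟩ := w_eq hζ0 hζ (g * h) hcne hm
    show Multiplicative.ofAdd (wa hζ0 hζ (g * h), wb hζ0 hζ (g * h)) =
      Multiplicative.ofAdd (wa hζ0 hζ g, wb hζ0 hζ g) *
        Multiplicative.ofAdd (wa hζ0 hζ h, wb hζ0 hζ h)
    rw [ha, hb]
    rfl

lemma tmap_apply (g : pauliGroup d n ζ hζ0) :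
    tmap hζ0 hζ g = Multiplicative.ofAdd (wa hζ0 hζ g, wb hζ0 hζ g) := rfl

lemma tmap_eq (g : pauliGroup d n ζ hζ0) {c : ℂ} {a b : Fin n → ZMod d} (hc : c ≠ 0)
    (h : IsWeyl (ζ ^ 2) (g : QV d n ≃ₗ[ℂ] QV d n) c a b) :
    tmap hζ0 hζ g = Multiplicative.ofAdd (a, b) := by
  obtain ⟨_, ha, hb⟩ := w_eq hζ0 hζ g hc h
  rw [tmap_apply, ha, hb]

include hζ in
lemma exists_pauli_weyl (a b : Fin n → ZMod d) :
    ∃ g : pauliGroup d n ζ hζ0, IsWeyl (ζ ^ 2) (g : QV d n ≃ₗ[ℂ] QV d n) 1 a b := by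
  have hd : (ζ ^ 2) ^ d = 1 := xi_pow_d hζ
  have hξ0 : (ζ ^ 2) ≠ 0 := pow_ne_zero 2 hζ0
  refine ⟨((List.finRange n).map (fun r => zP d n ζ hζ0 r ^ ((a r).val))).prod *
      ((List.finRange n).map (fun r => xP d n ζ hζ0 r ^ ((b r).val))).prod, ?_⟩
  have hcoeZ : ((((List.finRange n).map (fun r => zP d n ζ hζ0 r ^ ((a r).val))).prod :
      pauliGroup d n ζ hζ0) : QV d n ≃ₗ[ℂ] QV d n)
      = ((List.finRange n).map (fun r => (Zop d n r (ζ ^ 2) hξ0) ^ ((a r).val))).prod := by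
    rw [show (((((List.finRange n).map (fun r => zP d n ζ hζ0 r ^ ((a r).val))).prod :
        pauliGroup d n ζ hζ0)) : QV d n ≃ₗ[ℂ] QV d n)
      = (pauliGroup d n ζ hζ0).subtype
          ((List.finRange n).map (fun r => zP d n ζ hζ0 r ^ ((a r).val))).prod from rfl,
      map_list_prod, List.map_map]
    rfl
  have hcoeX : ((((List.finRange n).map (fun r => xP d n ζ hζ0 r ^ ((b r).val))).prod :
      pauliGroup d n ζ hζ0) : QV d n ≃ₗ[ℂ] QV d n)
      = ((List.finRange n).map (fun r => (Xop d n r) ^ ((b r).val))).prod := by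
    rw [show (((((List.finRange n).map (fun r => xP d n ζ hζ0 r ^ ((b r).val))).prod :
        pauliGroup d n ζ hζ0)) : QV d n ≃ₗ[ℂ] QV d n)
      = (pauliGroup d n ζ hζ0).subtype
          ((List.finRange n).map (fun r => xP d n ζ hζ0 r ^ ((b r).val))).prod from rfl,
      map_list_prod, List.map_map]
    rfl
  have hZ := isWeyl_Z_list (d := d) (n := n) (ζ ^ 2) hd hξ0 a (List.finRange n)
  have hX := isWeyl_X_list (d := d) (n := n) (ζ ^ 2) hd b (List.finRange n)
  have hsumZ : ((List.finRange n).map (fun r => Pi.single r (a r))).sum = a := by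
    rw [← Fin.sum_univ_def]
    exact Finset.univ_sum_single a
  have hsumX : ((List.finRange n).map (fun r => Pi.single r (b r))).sum = b := by
    rw [← Fin.sum_univ_def]
    exact Finset.univ_sum_single b
  rw [hsumZ] at hZ
  rw [hsumX] at hX
  have := hZ.mul hd hX
  rw [Subgroup.coe_mul, hcoeZ, hcoeX]
  simpa [dot_zero_left, chi_zero] using this

end Tau

/-- (i) There is a unique surjective group homomorphism
`τ : P_n → M = ℤ_d^{2n}` with `τ(Z_r) = z_r`, `τ(X_r) = x_r` and `τ(ζ·id) = 0`; its
kernel is the cyclic group generated by the scalar operator `ζ·id`, which has order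
`d̄`.  (ii) For all `x, y ∈ P_n` one has `x y = ξ^{φ(τ(x),τ(y))} y x` (here
`ξ^{c} = ζ^{2c}` is realized as `(ζ·id)^{2·c.val}`, via the canonical integer lift of
`c ∈ ℤ_d`).  (iii) Every element of `M` has a `τ`-preimage in `P_n` of the same
order.  (P_n is a Heisenberg extension of `(ℤ_d^{2n}, φ)`.) -/
theorem pauliGroup_heisenberg_extension
    (d n : ℕ) [NeZero d] (ζ : ℂ) (hζ0 : ζ ≠ 0) (hζ : IsPrimitiveRoot ζ (dbar d)) :
    ∃ t : (pauliGroup d n ζ hζ0) →* Multiplicative (PhSp d n),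
      (Function.Surjective t ∧
        (∀ r : Fin n, t (zP d n ζ hζ0 r) = Multiplicative.ofAdd (zvec d n r)) ∧
        (∀ r : Fin n, t (xP d n ζ hζ0 r) = Multiplicative.ofAdd (xvec d n r)) ∧
        t (sP d n ζ hζ0) = 1) ∧
      (∀ t' : (pauliGroup d n ζ hζ0) →* Multiplicative (PhSp d n),
        (Function.Surjective t' ∧
          (∀ r : Fin n, t' (zP d n ζ hζ0 r) = Multiplicative.ofAdd (zvec d n r)) ∧
          (∀ r : Fin n, t' (xP d n ζ hζ0 r) = Multiplicative.ofAdd (xvec d n r)) ∧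
          t' (sP d n ζ hζ0) = 1) → t' = t) ∧
      MonoidHom.ker t = Subgroup.zpowers (sP d n ζ hζ0) ∧
      orderOf (sP d n ζ hζ0) = dbar d ∧
      (∀ x y : (pauliGroup d n ζ hζ0),
        x * y =
          (sP d n ζ hζ0) ^
              (2 * (phiForm d n (Multiplicative.toAdd (t x)) (Multiplicative.toAdd (t y))).val) *
            (y * x)) ∧
      (∀ m : PhSp d n, ∃ g : (pauliGroup d n ζ hζ0),
        t g = Multiplicative.ofAdd m ∧ orderOf g = addOrderOf m) := by
  classical
  have hd : (ζ ^ 2) ^ d = 1 := xi_pow_d hζ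
  have hξ0 : (ζ ^ 2) ≠ 0 := pow_ne_zero 2 hζ0
  refine ⟨tmap hζ0 hζ, ⟨?_, ?_, ?_, ?_⟩, ?_, ?_, ?_, ?_, ?_⟩
  · -- surjectivity
    intro y
    obtain ⟨g, hg⟩ := exists_pauli_weyl hζ0 hζ (Multiplicative.toAdd y).1
      (Multiplicative.toAdd y).2
    exact ⟨g, tmap_eq hζ0 hζ g one_ne_zero hg⟩
  · -- value on zP
    intro r
    exact tmap_eq hζ0 hζ _ one_ne_zero (isWeyl_Zop (d := d) (n := n) _ (pow_ne_zero 2 hζ0) r)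
  · -- value on xP
    intro r
    exact tmap_eq hζ0 hζ _ one_ne_zero (isWeyl_Xop (d := d) (n := n) _ r)
  · -- value on sP
    exact tmap_eq hζ0 hζ _ hζ0 (isWeyl_scalarOp (d := d) (n := n) _ ζ hζ0)
  · -- uniqueness
    rintro t' ⟨-, hz', hx', hs'⟩
    have hsPval : tmap hζ0 hζ (sP d n ζ hζ0) = 1 :=
      tmap_eq hζ0 hζ _ hζ0 (isWeyl_scalarOp (d := d) (n := n) _ ζ hζ0)
    have key : ∀ x (hx : x ∈ pauliGroup d n ζ hζ0),
        t' ⟨x, hx⟩ = tmap hζ0 hζ ⟨x, hx⟩ := by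
      intro x hx
      refine Subgroup.closure_induction ?_ ?_ ?_ ?_ hx
      · intro x hxg
        simp only [Set.union_assoc, Set.mem_union, Set.mem_singleton_iff, Set.mem_range] at hxg
        rcases hxg with rfl | ⟨r, rfl⟩ | ⟨r, rfl⟩
        · show t' (sP d n ζ hζ0) = tmap hζ0 hζ (sP d n ζ hζ0)
          rw [hs', hsPval]
        · show t' (xP d n ζ hζ0 r) = tmap hζ0 hζ (xP d n ζ hζ0 r)
          rw [hx' r, tmap_eq hζ0 hζ _ one_ne_zero (isWeyl_Xop (d := d) (n := n) _ r)]
          rfl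
        · show t' (zP d n ζ hζ0 r) = tmap hζ0 hζ (zP d n ζ hζ0 r)
          rw [hz' r, tmap_eq hζ0 hζ _ one_ne_zero
            (isWeyl_Zop (d := d) (n := n) _ (pow_ne_zero 2 hζ0) r)]
          rfl
      · show t' 1 = tmap hζ0 hζ 1
        rw [map_one, map_one]
      · intro x y hx hy ihx ihy
        show t' (⟨x, hx⟩ * ⟨y, hy⟩) = tmap hζ0 hζ (⟨x, hx⟩ * ⟨y, hy⟩)
        rw [map_mul, map_mul, ihx, ihy]
      · intro x hx ih
        show t' (⟨x, hx⟩ : pauliGroup d n ζ hζ0)⁻¹ = tmap hζ0 hζ (⟨x, hx⟩ : pauliGroup d n ζ hζ0)⁻¹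
        rw [map_inv, map_inv, ih]
    refine MonoidHom.ext fun g => ?_
    have := key g.1 g.2
    simpa using this
  · -- kernel
    have hsPker : sP d n ζ hζ0 ∈ MonoidHom.ker (tmap hζ0 hζ) :=
      MonoidHom.mem_ker.mpr
        (tmap_eq hζ0 hζ _ hζ0 (isWeyl_scalarOp (d := d) (n := n) _ ζ hζ0))
    refine le_antisymm ?_ (Subgroup.zpowers_le.mpr hsPker)
    intro g hg
    have htg : tmap hζ0 hζ g = 1 := MonoidHom.mem_ker.mp hg
    have hpair : (wa hζ0 hζ g, wb hζ0 hζ g) = (0 : PhSp d n) :=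
      Multiplicative.ofAdd.injective htg
    have hwa : wa hζ0 hζ g = 0 := congrArg Prod.fst hpair
    have hwb : wb hζ0 hζ g = 0 := congrArg Prod.snd hpair
    obtain ⟨k, hk⟩ := (w_spec hζ0 hζ g).1
    have h1 : IsWeyl (ζ ^ 2) (g : QV d n ≃ₗ[ℂ] QV d n) (ζ ^ k) 0 0 := by
      have := (w_spec hζ0 hζ g).2
      rwa [hk, hwa, hwb] at this
    have h2 : IsWeyl (ζ ^ 2) ((sP d n ζ hζ0 ^ k : pauliGroup d n ζ hζ0) :
        QV d n ≃ₗ[ℂ] QV d n) (ζ ^ k) 0 0 := by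
      rw [SubgroupClass.coe_zpow]
      exact isWeyl_scalarOp_zpow (ζ ^ 2) hd hξ0 ζ hζ0 k
    exact Subgroup.mem_zpowers_iff.mpr ⟨k, Subtype.ext (h2.ext h1)⟩
  · -- order of sP
    have hne : ∀ m : ℕ, sP d n ζ hζ0 ^ m = 1 ↔ ζ ^ m = 1 := by
      intro m
      have hsm : IsWeyl (ζ ^ 2) ((sP d n ζ hζ0 ^ m : pauliGroup d n ζ hζ0) :
          QV d n ≃ₗ[ℂ] QV d n) (ζ ^ m) 0 0 := by
        rw [SubgroupClass.coe_pow]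
        exact isWeyl_scalarOp_pow (ζ ^ 2) hd ζ hζ0 m
      constructor
      · intro h
        rw [h] at hsm
        have := hsm (delta 0) 0
        simp only [dot_zero_left, chi_zero, mul_one, sub_zero] at this
        have hδ : delta (d := d) (n := n) 0 0 = 1 := by simp [delta]
        rw [show ((1 : pauliGroup d n ζ hζ0) : QV d n ≃ₗ[ℂ] QV d n) (delta 0) 0
            = delta (d := d) (n := n) 0 0 from rfl, hδ] at this
        rw [mul_one] at this
        exact this.symm
      · intro h
        rw [h] at hsm
        exact Subtype.ext (hsm.ext (IsWeyl.one _))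
    rw [orderOf_eq_orderOf_iff.mpr hne]
    exact hζ.eq_orderOf.symm
  · -- commutation
    intro x y
    have h1 := (w_spec hζ0 hζ x).2
    have h2 := (w_spec hζ0 hζ y).2
    set ax := wa hζ0 hζ x with hax
    set bx := wb hζ0 hζ x with hbx
    set ay := wa hζ0 hζ y with hay
    set byv := wb hζ0 hζ y with hbyv
    set cx := wC hζ0 hζ x with hcx
    set cy := wC hζ0 hζ y with hcy
    have hphi : phiForm d n (Multiplicative.toAdd (tmap hζ0 hζ x))
        (Multiplicative.toAdd (tmap hζ0 hζ y)) = dot ax byv - dot ay bx := by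
      show phiForm d n (ax, bx) (ay, byv) = _
      simp [phiForm, dot, Finset.sum_sub_distrib]
    set N := 2 * (phiForm d n (Multiplicative.toAdd (tmap hζ0 hζ x))
        (Multiplicative.toAdd (tmap hζ0 hζ y))).val with hN
    have hxy : IsWeyl (ζ ^ 2) ((x * y : pauliGroup d n ζ hζ0) : QV d n ≃ₗ[ℂ] QV d n)
        (cx * cy * chi (ζ ^ 2) (-(dot ay bx))) (ax + ay) (bx + byv) := h1.mul hd h2
    have hyx : IsWeyl (ζ ^ 2) ((y * x : pauliGroup d n ζ hζ0) : QV d n ≃ₗ[ℂ] QV d n)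
        (cy * cx * chi (ζ ^ 2) (-(dot ax byv))) (ay + ax) (byv + bx) := h2.mul hd h1
    have hsp : IsWeyl (ζ ^ 2) ((sP d n ζ hζ0 ^ N : pauliGroup d n ζ hζ0) :
        QV d n ≃ₗ[ℂ] QV d n) (ζ ^ N) 0 0 := by
      rw [SubgroupClass.coe_pow]
      exact isWeyl_scalarOp_pow (ζ ^ 2) hd ζ hζ0 N
    have hR : IsWeyl (ζ ^ 2)
        ((sP d n ζ hζ0 ^ N * (y * x) : pauliGroup d n ζ hζ0) : QV d n ≃ₗ[ℂ] QV d n)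
        (ζ ^ N * (cy * cx * chi (ζ ^ 2) (-(dot ax byv))) * chi (ζ ^ 2) (-(dot (ay + ax) 0)))
        (0 + (ay + ax)) (0 + (byv + bx)) := hsp.mul hd hyx
    rw [dot_zero_right, neg_zero, chi_zero, mul_one, zero_add, zero_add] at hR
    have hNval : (ζ : ℂ) ^ N = chi (ζ ^ 2) (dot ax byv - dot ay bx) := by
      rw [hN, hphi, pow_mul]
      rfl
    have hphase : (ζ : ℂ) ^ N * (cy * cx * chi (ζ ^ 2) (-(dot ax byv)))
        = cx * cy * chi (ζ ^ 2) (-(dot ay bx)) := by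
      rw [hNval]
      have hch : chi (ζ ^ 2) (dot ax byv - dot ay bx) * chi (ζ ^ 2) (-(dot ax byv))
          = chi (ζ ^ 2) (-(dot ay bx)) := by
        rw [← chi_add hd]
        congr 1
        ring
      calc chi (ζ ^ 2) (dot ax byv - dot ay bx) * (cy * cx * chi (ζ ^ 2) (-(dot ax byv)))
          = cy * cx * (chi (ζ ^ 2) (dot ax byv - dot ay bx)
              * chi (ζ ^ 2) (-(dot ax byv))) := by ring
        _ = cx * cy * chi (ζ ^ 2) (-(dot ay bx)) := by rw [hch]; ring
    rw [hphase, add_comm ay ax, add_comm byv bx] at hR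
    exact Subtype.ext (hxy.ext hR)
  · -- same-order preimages
    intro m
    obtain ⟨g1, hg1⟩ := exists_pauli_weyl hζ0 hζ m.1 m.2
    set D := addOrderOf m with hD
    have hDm : D • m = 0 := addOrderOf_nsmul_eq_zero m
    have hDa : D • m.1 = 0 := congrArg Prod.fst hDm
    have hDb : D • m.2 = 0 := congrArg Prod.snd hDm
    have hDdvd : D ∣ d := by
      refine addOrderOf_dvd_iff_nsmul_eq_zero.mpr ?_
      have hzz : ∀ v : Fin n → ZMod d, d • v = 0 := by
        intro v
        funext i
        show d • v i = 0
        simp [nsmul_eq_mul, ZMod.natCast_self]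
      show (d • m.1, d • m.2) = (0, 0)
      rw [hzz m.1, hzz m.2]
    have hDs : ((D : ZMod d)) * dot m.1 m.2 = 0 := by
      rw [← dot_nsmul_left, hDa, dot_zero_left]
    have hdvd2 : d ∣ D * (dot m.1 m.2).val := by
      have hcast : ((D * (dot m.1 m.2).val : ℕ) : ZMod d) = 0 := by
        push_cast [ZMod.natCast_val, ZMod.cast_id]
        exact hDs
      exact (ZMod.natCast_eq_zero_iff _ d).mp hcast
    obtain ⟨u, hu⟩ := hdvd2
    have hpowop := isWeyl_pow (ζ ^ 2) hd hg1 D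
    rw [hDa, hDb] at hpowop
    have hpowD : IsWeyl (ζ ^ 2) ((g1 ^ D : pauliGroup d n ζ hζ0) : QV d n ≃ₗ[ℂ] QV d n)
        (chi (ζ ^ 2) (-(((∑ j ∈ Finset.range D, j : ℕ) : ZMod d) * dot m.1 m.2))) 0 0 := by
      rw [SubgroupClass.coe_pow]
      exact hpowop
    set GD := (∑ j ∈ Finset.range D, j : ℕ) with hGDdef
    set s := dot m.1 m.2 with hsdef
    set P := chi (ζ ^ 2) ((GD : ZMod d) * s) with hPdef
    have hPinv : chi (ζ ^ 2) (-((GD : ZMod d) * s)) * P = 1 := chi_neg_mul hd _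
    have hPval : P = ((ζ : ℂ) ^ d) ^ ((D - 1) * u) := by
      rw [hPdef, show ((GD : ZMod d) * s) = ((GD * s.val : ℕ) : ZMod d) by
        push_cast [ZMod.natCast_val, ZMod.cast_id]; ring, chi_natCast hd, ← pow_mul, ← pow_mul]
      congr 1
      have h2g : GD * 2 = D * (D - 1) := Finset.sum_range_id_mul_two D
      calc 2 * (GD * s.val) = (GD * 2) * s.val := by ring
        _ = (D * (D - 1)) * s.val := by rw [h2g]
        _ = (D - 1) * (D * s.val) := by ring
        _ = (D - 1) * (d * u) := by rw [hu]
        _ = d * ((D - 1) * u) := by ring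
    have hε : ((ζ : ℂ) ^ d) ^ 2 = 1 := by
      rw [← pow_mul, mul_comm, pow_mul]
      exact hd
    have hP2 : P * P = 1 := by
      rw [hPval, ← pow_two, ← pow_mul, mul_comm ((D - 1) * u) 2, pow_mul, hε, one_pow]
    have hPcases : P = 1 ∨ P = -1 := mul_self_eq_one_iff.mp hP2
    have hex : ∃ k0 : ℕ, (ζ : ℂ) ^ (k0 * D) = P := by
      rcases hPcases with hP1 | hP1
      · exact ⟨0, by simp [hP1]⟩
      · have hζd : (ζ : ℂ) ^ d = -1 := by
          have hεm : (ζ : ℂ) ^ d * (ζ : ℂ) ^ d = 1 := by rw [← pow_two]; exact hε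
          rcases mul_self_eq_one_iff.mp hεm with h | h
          · exfalso
            rw [hPval, h, one_pow] at hP1
            norm_num at hP1
          · exact h
        refine ⟨d / D, ?_⟩
        rw [Nat.div_mul_cancel hDdvd, hζd, hP1]
    obtain ⟨k0, hk0⟩ := hex
    have hsc : IsWeyl (ζ ^ 2) ((sP d n ζ hζ0 ^ k0 : pauliGroup d n ζ hζ0) :
        QV d n ≃ₗ[ℂ] QV d n) (ζ ^ k0) 0 0 := by
      rw [SubgroupClass.coe_pow]
      exact isWeyl_scalarOp_pow (ζ ^ 2) hd ζ hζ0 k0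
    have hcommop : ((g1 : QV d n ≃ₗ[ℂ] QV d n))
        * ((sP d n ζ hζ0 ^ k0 : pauliGroup d n ζ hζ0) : QV d n ≃ₗ[ℂ] QV d n)
        = ((sP d n ζ hζ0 ^ k0 : pauliGroup d n ζ hζ0) : QV d n ≃ₗ[ℂ] QV d n) * ↑g1 := by
      have hL := hg1.mul hd hsc
      have hR := hsc.mul hd hg1
      rw [dot_zero_left, neg_zero, chi_zero, mul_one, one_mul, add_zero, add_zero] at hL
      rw [dot_zero_right, neg_zero, chi_zero, mul_one, mul_one, zero_add, zero_add] at hR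
      exact hL.ext hR
    have hcomm : Commute g1 (sP d n ζ hζ0 ^ k0) := Subtype.ext hcommop
    set g' := g1 * sP d n ζ hζ0 ^ k0 with hg'def
    have hgD : g' ^ D = 1 := by
      rw [hg'def, hcomm.mul_pow, ← pow_mul]
      refine Subtype.ext ?_
      have hsc2 : IsWeyl (ζ ^ 2) ((sP d n ζ hζ0 ^ (k0 * D) : pauliGroup d n ζ hζ0) :
          QV d n ≃ₗ[ℂ] QV d n) (ζ ^ (k0 * D)) 0 0 := by
        rw [SubgroupClass.coe_pow]
        exact isWeyl_scalarOp_pow (ζ ^ 2) hd ζ hζ0 (k0 * D)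
      have hprod := hpowD.mul hd hsc2
      rw [dot_zero_left, neg_zero, chi_zero, mul_one, add_zero, hk0, hPinv] at hprod
      exact hprod.ext (IsWeyl.one _)
    have htg1 : tmap hζ0 hζ g1 = Multiplicative.ofAdd m :=
      tmap_eq hζ0 hζ g1 one_ne_zero hg1
    have htg' : tmap hζ0 hζ g' = Multiplicative.ofAdd m := by
      rw [hg'def, map_mul, htg1, map_pow,
        tmap_eq hζ0 hζ _ hζ0 (isWeyl_scalarOp (d := d) (n := n) _ ζ hζ0),
        show Multiplicative.ofAdd ((0 : Fin n → ZMod d), (0 : Fin n → ZMod d))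
          = (1 : Multiplicative (PhSp d n)) from rfl, one_pow, mul_one]
    refine ⟨g', htg', ?_⟩
    have hdvd1 : orderOf g' ∣ D := orderOf_dvd_of_pow_eq_one hgD
    have hdvd3 : D ∣ orderOf g' := by
      refine addOrderOf_dvd_iff_nsmul_eq_zero.mpr ?_
      have he : tmap hζ0 hζ (g' ^ orderOf g') = 1 := by
        rw [pow_orderOf_eq_one, map_one]
      rw [map_pow, htg', ← ofAdd_nsmul] at he
      exact Multiplicative.ofAdd.injective he
    exact Nat.dvd_antisymm hdvd1 hdvd3


end QuditPauli
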